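/- Let U ⊆ ℂ be a nonempty open connected set, let f, ζ, h : ℂ → ℂ be functions such that f and ζ are real-differentiable at every point of U, and such that for all z ∈ U the Wirtinger equations ∂ζ/∂z̄(z) = h(z) and ∂f/∂z̄(z) + h(z)·f(z) = 0 hold. Then either f is identically zero on U, or the zero set {z ∈ U : f(z) = 0} consists of isolated points (every zero z₀ has a punctured neighborhood in U on which f does not vanish). -/

import Mathlib

/-- The Wirtinger derivative ∂g/∂z̄ of `g : ℂ → ℂ` at `z`, defined via the real
Fréchet derivative as `(1/2)(Dg(z)(1) + i·Dg(z)(i))`. -/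
noncomputable def wirtingerBar (g : ℂ → ℂ) (z : ℂ) : ℂ :=
  (1 / 2 : ℂ) * (fderiv ℝ g z 1 + Complex.I * fderiv ℝ g z Complex.I)

/-- If `f` and `ζ` are real-differentiable on a nonempty open connected set `U ⊆ ℂ` and
satisfy `∂ζ/∂z̄ = h` and `∂f/∂z̄ + h·f = 0` on `U`, then either `f ≡ 0` on `U`, or every
zero of `f` in `U` is isolated: it has a punctured neighborhood in `U` on which `f` does
not vanish. -/
theorem zeros_isolated_of_wirtinger_eq (U : Set ℂ) (hU : IsOpen U)
    (hUconn : IsConnected U)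
    (f ζ h : ℂ → ℂ)
    (hf : ∀ z ∈ U, DifferentiableAt ℝ f z)
    (hζ : ∀ z ∈ U, DifferentiableAt ℝ ζ z)
    (hζeq : ∀ z ∈ U, wirtingerBar ζ z = h z)
    (hfeq : ∀ z ∈ U, wirtingerBar f z + h z * f z = 0) :
    (∀ z ∈ U, f z = 0) ∨
      ∀ z₀ ∈ U, f z₀ = 0 →
        ∃ ε > 0, ∀ z ∈ U, z ≠ z₀ → ‖z - z₀‖ < ε → f z ≠ 0 := by
  set g : ℂ → ℂ := fun z => f z * Complex.exp (ζ z) with hgdef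
  have key : ∀ z ∈ U, DifferentiableAt ℂ g z := by
    intro z hz
    have hfz := hf z hz
    have hζz := hζ z hz
    have hexp : HasFDerivAt (fun y => Complex.exp (ζ y))
        (((ContinuousLinearMap.smulRight (1 : ℂ →L[ℂ] ℂ)
            (Complex.exp (ζ z))).restrictScalars ℝ).comp (fderiv ℝ ζ z)) z :=
      ((Complex.hasDerivAt_exp (ζ z)).hasFDerivAt.restrictScalars ℝ).comp z hζz.hasFDerivAt
    set L : ℂ →L[ℝ] ℂ :=
      f z • (((ContinuousLinearMap.smulRight (1 : ℂ →L[ℂ] ℂ)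
          (Complex.exp (ζ z))).restrictScalars ℝ).comp (fderiv ℝ ζ z))
        + Complex.exp (ζ z) • fderiv ℝ f z with hLdef
    have hgd : HasFDerivAt g L z := hfz.hasFDerivAt.mul hexp
    have e1 : fderiv ℝ ζ z 1 + Complex.I * fderiv ℝ ζ z Complex.I = 2 * h z := by
      have := hζeq z hz
      unfold wirtingerBar at this
      linear_combination 2 * this
    have e2 : fderiv ℝ f z 1 + Complex.I * fderiv ℝ f z Complex.I
        = -(2 * (h z * f z)) := by
      have := hfeq z hz
      unfold wirtingerBar at this
      linear_combination 2 * this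
    have hL1 : ∀ v : ℂ, L v = f z * (fderiv ℝ ζ z v * Complex.exp (ζ z))
        + Complex.exp (ζ z) * fderiv ℝ f z v := by
      intro v
      simp [hLdef, ContinuousLinearMap.smulRight_apply, smul_eq_mul]
    have hLI : L Complex.I = Complex.I * L 1 := by
      rw [hL1, hL1]
      have hDζI : fderiv ℝ ζ z Complex.I
          = Complex.I * fderiv ℝ ζ z 1 - 2 * Complex.I * h z := by
        linear_combination (-Complex.I) * e1 + (fderiv ℝ ζ z Complex.I) * Complex.I_sq
      have hDfI : fderiv ℝ f z Complex.I
          = Complex.I * fderiv ℝ f z 1 + 2 * Complex.I * (h z * f z) := by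
        linear_combination (-Complex.I) * e2 + (fderiv ℝ f z Complex.I) * Complex.I_sq
      rw [hDζI, hDfI]
      ring
    have hres : (ContinuousLinearMap.smulRight (1 : ℂ →L[ℂ] ℂ) (L 1)).restrictScalars ℝ = L := by
      apply ContinuousLinearMap.ext
      intro v
      have hv : v = (v.re : ℝ) • (1 : ℂ) + (v.im : ℝ) • Complex.I := by
        simp only [Complex.real_smul, mul_one]
        exact (Complex.re_add_im v).symm
      rw [hv]
      simp only [map_add, map_smul, ContinuousLinearMap.coe_restrictScalars',
        ContinuousLinearMap.smulRight_apply, ContinuousLinearMap.one_apply, hLI]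
      simp only [Complex.real_smul, smul_eq_mul]
      ring
    exact (hasFDerivAt_of_restrictScalars ℝ hgd hres).differentiableAt
  have gdiff : DifferentiableOn ℂ g U := fun z hz => (key z hz).differentiableWithinAt
  have ganal : AnalyticOnNhd ℂ g U := gdiff.analyticOnNhd hU
  by_cases hall : ∀ z ∈ U, f z = 0
  · exact Or.inl hall
  · right
    intro z₀ hz₀ hfz₀
    rcases (ganal z₀ hz₀).eventually_eq_zero_or_eventually_ne_zero with hcase | hcase
    · exfalso
      apply hall
      intro z hz
      have hz0 := ganal.eqOn_zero_of_preconnected_of_eventuallyEq_zero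
        hUconn.isPreconnected hz₀ hcase hz
      have : f z * Complex.exp (ζ z) = 0 := hz0
      simpa [Complex.exp_ne_zero] using this
    · rw [eventually_nhdsWithin_iff] at hcase
      rcases Metric.eventually_nhds_iff.1 hcase with ⟨ε, hε, hball⟩
      refine ⟨ε, hε, fun z _ hne habs hf0 => ?_⟩
      have hgz : g z ≠ 0 := by
        apply hball (show dist z z₀ < ε by rwa [Complex.dist_eq])
        simpa using hne
      exact hgz (by simp [hgdef, hf0])
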